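/- Let F be a finite field of characteristic 2 with q elements. Then the number of tuples (x₁,y₁,x₂,y₂) ∈ F⁴ satisfying x₁y₁ + x₂y₂ = 0 and x₁²y₁ + x₁y₁² + x₂²y₂ + x₂y₂² = 0 is strictly greater than the number of tuples satisfying x₁²y₁ + x₁y₁² + x₂²y₂ + x₂y₂² = 0 and x₁² + y₁² + x₁y₁ + x₂y₂ = 0. -/

import Mathlib

open Finset Polynomial

section Helpers

variable {F : Type*} [Field F] [Fintype F] [CharP F 2] [DecidableEq F]

private lemma two_eq_zero : (2 : F) = 0 := by
  have := CharP.cast_eq_zero F 2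
  simpa using this

private lemma roots_card_le (e c : F) :
    ((X ^ 2 + C e * X + C c : F[X]).roots.toFinset).card ≤ 2 := by
  refine le_trans (Multiset.toFinset_card_le _) (le_trans (Polynomial.card_roots' _) ?_)
  have h : (X ^ 2 + C e * X + C c : F[X]) = C 1 * X ^ 2 + C e * X + C c := by simp
  rw [h, Polynomial.natDegree_quadratic one_ne_zero]

private lemma quad_ne_zero (e c : F) (hc : c ≠ 0) : (X ^ 2 + C e * X + C c : F[X]) ≠ 0 := by
  intro h
  have h0 := congrArg (fun p : F[X] => Polynomial.coeff p 0) h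
  simp [coeff_X_pow] at h0
  exact hc h0

/-- Fiber over an axis point `(0, y)` (or symmetric) is a single point. -/
private lemma fiber_axis (y : F) (hy : y ≠ 0) (p : F × F)
    (hH : p.1 ^ 2 * p.2 + p.1 * p.2 ^ 2 = 0)
    (hG : y ^ 2 + p.1 * p.2 = 0) : p = (y, y) := by
  have h2 : (2 : F) = 0 := two_eq_zero
  have hpq : p.1 * p.2 = y ^ 2 := by linear_combination hG - y ^ 2 * h2
  have hp1 : p.1 ≠ 0 := by
    intro h; rw [h, zero_mul] at hpq; exact hy (by simpa using pow_eq_zero_iff (n := 2) (by norm_num) |>.mp hpq.symm)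
  have hp2 : p.2 ≠ 0 := by
    intro h; rw [h, mul_zero] at hpq; exact hy (by simpa using pow_eq_zero_iff (n := 2) (by norm_num) |>.mp hpq.symm)
  have hfac : p.1 * p.2 * (p.1 + p.2) = 0 := by linear_combination hH
  have hs : p.1 + p.2 = 0 := by
    rcases mul_eq_zero.mp hfac with h | h
    · exact absurd h (mul_ne_zero hp1 hp2)
    · exact h
  have hp21 : p.2 = p.1 := by linear_combination hs - p.1 * h2
  have hsq : (p.1 + y) * (p.1 + y) = 0 := by
    linear_combination hpq - p.1 * hp21 + (p.1 * y + y ^ 2) * h2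
  have hxy : p.1 = y := by
    have := mul_self_eq_zero.mp hsq
    linear_combination this - y * h2
  exact Prod.ext (by simp [hxy]) (by simp [hp21, hxy])

/-- Fiber over a generic point `(x, y)` with `x y ≠ 0` has at most 2 elements. -/
private lemma fiber_two (x y : F) (hx : x ≠ 0) (hy : y ≠ 0) :
    ((univ : Finset (F × F)).filter fun p =>
      x ^ 2 * y + x * y ^ 2 + p.1 ^ 2 * p.2 + p.1 * p.2 ^ 2 = 0 ∧
      x ^ 2 + y ^ 2 + x * y + p.1 * p.2 = 0).card ≤ 2 := by
  have h2 : (2 : F) = 0 := two_eq_zero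
  by_cases hc : x ^ 2 + y ^ 2 + x * y = 0
  · have hempty : ((univ : Finset (F × F)).filter fun p =>
        x ^ 2 * y + x * y ^ 2 + p.1 ^ 2 * p.2 + p.1 * p.2 ^ 2 = 0 ∧
        x ^ 2 + y ^ 2 + x * y + p.1 * p.2 = 0) = ∅ := by
      ext p
      simp only [mem_filter, mem_univ, true_and, Finset.notMem_empty, iff_false, not_and]
      intro hH hG
      have hpq : p.1 * p.2 = 0 := by linear_combination hG - hc
      have hxy0 : x ^ 2 * y + x * y ^ 2 = 0 := by
        rcases mul_eq_zero.mp hpq with h | h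
        · linear_combination hH - (p.1 * p.2 + p.2 ^ 2) * h
        · linear_combination hH - (p.1 ^ 2 + p.1 * p.2) * h
      have hfac : x * y * (x + y) = 0 := by linear_combination hxy0
      have hs : x + y = 0 := by
        rcases mul_eq_zero.mp hfac with h | h
        · exact absurd h (mul_ne_zero hx hy)
        · exact h
      have hyx : y = x := by linear_combination hs - x * h2
      have : x * x = 0 := by
        linear_combination hc - (y + 2 * x) * hyx - (x * x) * h2
      exact hx (mul_self_eq_zero.mp this)
    rw [hempty]; simp
  · set c : F := x ^ 2 + y ^ 2 + x * y with hcdef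
    set e : F := (x ^ 2 * y + x * y ^ 2) / c with hedef
    have hce : c * e = x ^ 2 * y + x * y ^ 2 := by
      rw [hedef]; field_simp
    refine le_trans (Finset.card_le_card_of_injOn (fun p => p.1) ?_ ?_) (roots_card_le e c)
    · intro p hp
      simp only [Finset.mem_coe, mem_filter, mem_univ, true_and] at hp
      obtain ⟨hH, hG⟩ := hp
      have hpq : p.1 * p.2 = c := by linear_combination hG - c * h2
      have hcs : c * (p.1 + p.2) = c * e := by
        linear_combination (-1 : F) * hce - hH + (p.1 + p.2) * hpq + (c * (p.1 + p.2)) * h2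
      have hsum : p.1 + p.2 = e := mul_left_cancel₀ hc hcs
      have hroot : p.1 ^ 2 + e * p.1 + c = 0 := by
        linear_combination (-(p.1)) * hsum - hpq + (p.1 ^ 2 + p.1 * p.2) * h2
      rw [Finset.mem_coe, Multiset.mem_toFinset, Polynomial.mem_roots (quad_ne_zero e c hc)]
      simp only [IsRoot, Polynomial.eval_add, Polynomial.eval_mul, Polynomial.eval_pow,
        Polynomial.eval_X, Polynomial.eval_C]
      linear_combination hroot
    · intro p hp p' hp' h1
      have hp0 := Finset.mem_filter.mp (Finset.mem_coe.mp hp)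
      have hp0' := Finset.mem_filter.mp (Finset.mem_coe.mp hp')
      have hpq : p.1 * p.2 = c := by linear_combination hp0.2.2 - c * h2
      have hpq' : p'.1 * p'.2 = c := by linear_combination hp0'.2.2 - c * h2
      have h1' : p.1 = p'.1 := h1
      have hp1 : p.1 ≠ 0 := by
        intro h; rw [h, zero_mul] at hpq; exact hc hpq.symm
      have h2eq : p.2 = p'.2 := by
        have hx2 : p.1 * p.2 = p.1 * p'.2 := by rw [hpq, h1', hpq']
        exact mul_left_cancel₀ hp1 hx2
      exact Prod.ext h1' h2eq

private lemma zero_fiber_card :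
    ((univ : Finset (F × F)).filter fun p => p.1 * p.2 = 0).card + 1 ≤ 2 * Fintype.card F := by
  have hsub : ((univ : Finset (F × F)).filter fun p => p.1 * p.2 = 0) ⊆
      (({0} : Finset F) ×ˢ univ) ∪ (univ ×ˢ ({0} : Finset F)) := by
    intro p hp
    simp only [mem_filter, mem_univ, true_and] at hp
    rcases mul_eq_zero.mp hp with h | h
    · exact Finset.mem_union_left _ (Finset.mem_product.mpr ⟨by simp [h], Finset.mem_univ _⟩)
    · exact Finset.mem_union_right _ (Finset.mem_product.mpr ⟨Finset.mem_univ _, by simp [h]⟩)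
  have hu := Finset.card_union_add_card_inter (({0} : Finset F) ×ˢ (univ : Finset F))
    ((univ : Finset F) ×ˢ ({0} : Finset F))
  have hmem : ((0, 0) : F × F) ∈ ((({0} : Finset F) ×ˢ univ) ∩ (univ ×ˢ ({0} : Finset F))) := by
    simp [Finset.mem_product]
  have h1 : 1 ≤ ((({0} : Finset F) ×ˢ univ) ∩ (univ ×ˢ ({0} : Finset F))).card :=
    Finset.card_pos.mpr ⟨_, hmem⟩
  have hc1 : ((({0} : Finset F) ×ˢ (univ : Finset F))).card = Fintype.card F := by
    rw [Finset.card_product]; simp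
  have hc2 : (((univ : Finset F) ×ˢ ({0} : Finset F))).card = Fintype.card F := by
    rw [Finset.card_product]; simp
  have hle := Finset.card_le_card hsub
  omega

/-- transport from `Fin 4 → F` to pairs of pairs -/
private lemma card_transport (P : (F × F) × (F × F) → Prop) [DecidablePred P] :
    Nat.card {v : Fin 4 → F // P ((v 0, v 1), (v 2, v 3))} = (univ.filter P).card := by
  have e : {v : Fin 4 → F // P ((v 0, v 1), (v 2, v 3))} ≃ {p : (F × F) × (F × F) // P p} :=
    { toFun := fun v => ⟨((v.1 0, v.1 1), (v.1 2, v.1 3)), v.2⟩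
      invFun := fun p => ⟨![p.1.1.1, p.1.1.2, p.1.2.1, p.1.2.2], p.2⟩
      left_inv := by
        rintro ⟨v, hv⟩
        ext i
        fin_cases i <;> rfl
      right_inv := by rintro ⟨⟨⟨a, b⟩, ⟨cc, d⟩⟩, hp⟩; rfl }
  rw [Nat.card_congr e, Nat.card_eq_fintype_card, Fintype.card_subtype]

end Helpers

/-- **`|V(f₂, h₂)| > |V(g₂, h₂)|` over finite fields of characteristic 2.** -/
theorem stmt_13 (F : Type*) [Field F] [Fintype F] [CharP F 2] :
    Nat.card {v : Fin 4 → F // v 0 * v 1 + v 2 * v 3 = 0 ∧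
        (v 0) ^ 2 * v 1 + v 0 * (v 1) ^ 2 + (v 2) ^ 2 * v 3 + v 2 * (v 3) ^ 2 = 0}
      > Nat.card {v : Fin 4 → F //
        (v 0) ^ 2 * v 1 + v 0 * (v 1) ^ 2 + (v 2) ^ 2 * v 3 + v 2 * (v 3) ^ 2 = 0 ∧
        (v 0) ^ 2 + (v 1) ^ 2 + v 0 * v 1 + v 2 * v 3 = 0} := by
  classical
  have h2 : (2 : F) = 0 := two_eq_zero
  set q := Fintype.card F with hqdef
  have hq2 : 2 ≤ q := Fintype.one_lt_card
  clear_value q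
  -- transport
  have e1 : Nat.card {v : Fin 4 → F // v 0 * v 1 + v 2 * v 3 = 0 ∧
        (v 0) ^ 2 * v 1 + v 0 * (v 1) ^ 2 + (v 2) ^ 2 * v 3 + v 2 * (v 3) ^ 2 = 0}
      = (univ.filter fun p : (F × F) × (F × F) =>
          p.1.1 * p.1.2 + p.2.1 * p.2.2 = 0 ∧
          p.1.1 ^ 2 * p.1.2 + p.1.1 * p.1.2 ^ 2 + p.2.1 ^ 2 * p.2.2 + p.2.1 * p.2.2 ^ 2 = 0).card :=
    card_transport (fun p : (F × F) × (F × F) =>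
          p.1.1 * p.1.2 + p.2.1 * p.2.2 = 0 ∧
          p.1.1 ^ 2 * p.1.2 + p.1.1 * p.1.2 ^ 2 + p.2.1 ^ 2 * p.2.2 + p.2.1 * p.2.2 ^ 2 = 0)
  have e2 : Nat.card {v : Fin 4 → F //
        (v 0) ^ 2 * v 1 + v 0 * (v 1) ^ 2 + (v 2) ^ 2 * v 3 + v 2 * (v 3) ^ 2 = 0 ∧
        (v 0) ^ 2 + (v 1) ^ 2 + v 0 * v 1 + v 2 * v 3 = 0}
      = (univ.filter fun p : (F × F) × (F × F) =>
          p.1.1 ^ 2 * p.1.2 + p.1.1 * p.1.2 ^ 2 + p.2.1 ^ 2 * p.2.2 + p.2.1 * p.2.2 ^ 2 = 0 ∧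
          p.1.1 ^ 2 + p.1.2 ^ 2 + p.1.1 * p.1.2 + p.2.1 * p.2.2 = 0).card :=
    card_transport (fun p : (F × F) × (F × F) =>
          p.1.1 ^ 2 * p.1.2 + p.1.1 * p.1.2 ^ 2 + p.2.1 ^ 2 * p.2.2 + p.2.1 * p.2.2 ^ 2 = 0 ∧
          p.1.1 ^ 2 + p.1.2 ^ 2 + p.1.1 * p.1.2 + p.2.1 * p.2.2 = 0)
  rw [e1, e2]
  clear e1 e2
  set Tf := (univ.filter fun p : (F × F) × (F × F) =>
          p.1.1 * p.1.2 + p.2.1 * p.2.2 = 0 ∧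
          p.1.1 ^ 2 * p.1.2 + p.1.1 * p.1.2 ^ 2 + p.2.1 ^ 2 * p.2.2 + p.2.1 * p.2.2 ^ 2 = 0) with hTf
  set Tg := (univ.filter fun p : (F × F) × (F × F) =>
          p.1.1 ^ 2 * p.1.2 + p.1.1 * p.1.2 ^ 2 + p.2.1 ^ 2 * p.2.2 + p.2.1 * p.2.2 ^ 2 = 0 ∧
          p.1.1 ^ 2 + p.1.2 ^ 2 + p.1.1 * p.1.2 + p.2.1 * p.2.2 = 0) with hTg
  clear_value Tf Tg
  -- ## Lower bound : Tf.card ≥ 3q² - 2q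
  -- ## Lower bound : Tf.card ≥ 3q² - 2q
  have hAcard : ((univ : Finset (F × F)).image fun a : F × F => (a, a)).card = q * q := by
    rw [Finset.card_image_of_injective _ (fun a b h => ((Prod.mk.injEq _ _ _ _).mp h).1)]
    rw [Finset.card_univ, Fintype.card_prod, hqdef]
  set A := (univ : Finset (F × F)).image (fun a : F × F => (a, a)) with hA
  set Bsrc := (univ : Finset (F × F)).filter (fun a => a.1 ≠ a.2) with hBsrc
  set B := Bsrc.image (fun a : F × F => ((a.1, a.2), (a.2, a.1))) with hB
  set Cs := Bsrc.image (fun a : F × F => ((a.1, (0 : F)), ((0 : F), a.2))) with hC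
  clear_value A Bsrc B Cs
  have huniv2 : (univ : Finset (F × F)).card = q * q := by
    rw [Finset.card_univ, Fintype.card_prod, hqdef]
  have hBcard : B.card = Bsrc.card := by
    rw [hB]
    apply Finset.card_image_of_injective
    intro a b hab
    have h1 := congrArg (fun z => z.1.1) hab
    have h2' := congrArg (fun z => z.1.2) hab
    exact Prod.ext h1 h2'
  have hCcard : Cs.card = Bsrc.card := by
    rw [hC]
    apply Finset.card_image_of_injective
    intro a b hab
    have h1 := congrArg (fun z => z.1.1) hab
    have h2' := congrArg (fun z => z.2.2) hab
    exact Prod.ext h1 h2'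
  have hdiag : ((univ : Finset (F × F)).filter fun a => a.1 = a.2).card = q := by
    have himg : ((univ : Finset (F × F)).filter fun a => a.1 = a.2)
        = (univ : Finset F).image (fun x => (x, x)) := by
      ext a
      simp only [mem_filter, mem_univ, true_and, Finset.mem_image]
      constructor
      · intro h
        exact ⟨a.1, Prod.ext rfl h⟩
      · rintro ⟨x, rfl⟩; rfl
    rw [himg, Finset.card_image_of_injective _ (fun x y h => (Prod.mk.injEq _ _ _ _).mp h |>.1),
      Finset.card_univ, hqdef]
  have hcb : Bsrc.card + q = q * q := by
    have hBeq : Bsrc = univ \ ((univ : Finset (F × F)).filter fun a => a.1 = a.2) := by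
      ext a
      simp [hBsrc]
    have hle : q ≤ q * q := by nlinarith
    have h1 := Finset.card_sdiff_of_subset (Finset.filter_subset (fun a : F × F => a.1 = a.2) univ)
    rw [hdiag, huniv2] at h1
    rw [hBeq, h1]
    exact Nat.sub_add_cancel hle
  have hdisjAB : Disjoint A B := by
    rw [Finset.disjoint_left]
    intro x hxA hxB
    rw [hA] at hxA
    rw [hB] at hxB
    obtain ⟨a, -, ha⟩ := Finset.mem_image.mp hxA
    obtain ⟨b, hb, hbx⟩ := Finset.mem_image.mp hxB
    rw [hBsrc, mem_filter] at hb
    rw [← ha] at hbx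
    have h1 := congrArg (fun z => z.1.1) hbx
    have h2' := congrArg (fun z => z.2.1) hbx
    simp only at h1 h2'
    exact hb.2 (h1.trans h2'.symm)
  have hdisjAC : Disjoint A Cs := by
    rw [Finset.disjoint_left]
    intro x hxA hxC
    rw [hA] at hxA
    rw [hC] at hxC
    obtain ⟨a, -, ha⟩ := Finset.mem_image.mp hxA
    obtain ⟨b, hb, hbx⟩ := Finset.mem_image.mp hxC
    rw [hBsrc, mem_filter] at hb
    rw [← ha] at hbx
    have h1 := congrArg (fun z => z.1.1) hbx
    have h2' := congrArg (fun z => z.2.1) hbx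
    have h3 := congrArg (fun z => z.1.2) hbx
    have h4 := congrArg (fun z => z.2.2) hbx
    simp only at h1 h2' h3 h4
    exact hb.2 ((h1.trans h2'.symm).trans (h4.trans h3.symm).symm)
  have hdisjBC : Disjoint B Cs := by
    rw [Finset.disjoint_left]
    intro x hxB hxC
    rw [hB] at hxB
    rw [hC] at hxC
    obtain ⟨a, haf, ha⟩ := Finset.mem_image.mp hxB
    obtain ⟨b, hb, hbx⟩ := Finset.mem_image.mp hxC
    rw [hBsrc, mem_filter] at hb haf
    rw [← ha] at hbx
    have h1 := congrArg (fun z => z.1.1) hbx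
    have h4 := congrArg (fun z => z.2.2) hbx
    simp only at h1 h4
    exact hb.2 (h1.trans h4.symm)
  have hsubTf : A ∪ B ∪ Cs ⊆ Tf := by
    intro x hx
    rw [hTf, mem_filter]
    refine ⟨mem_univ _, ?_⟩
    rcases Finset.mem_union.mp hx with hx' | hxC
    · rcases Finset.mem_union.mp hx' with hxA | hxB
      · rw [hA] at hxA
        obtain ⟨a, -, rfl⟩ := Finset.mem_image.mp hxA
        constructor
        · linear_combination (a.1 * a.2) * h2
        · linear_combination (a.1 ^ 2 * a.2 + a.1 * a.2 ^ 2) * h2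
      · rw [hB] at hxB
        obtain ⟨a, -, rfl⟩ := Finset.mem_image.mp hxB
        constructor
        · linear_combination (a.1 * a.2) * h2
        · linear_combination (a.1 ^ 2 * a.2 + a.1 * a.2 ^ 2) * h2
    · rw [hC] at hxC
      obtain ⟨a, -, rfl⟩ := Finset.mem_image.mp hxC
      constructor <;> ring
  have hTflow : q * q + Bsrc.card + Bsrc.card ≤ Tf.card := by
    have hU : (A ∪ B ∪ Cs).card = q * q + Bsrc.card + Bsrc.card := by
      rw [Finset.card_union_of_disjoint
          (Finset.disjoint_union_left.mpr ⟨hdisjAC, hdisjBC⟩),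
        Finset.card_union_of_disjoint hdisjAB, hAcard, hBcard, hCcard]
    rw [← hU]
    exact Finset.card_le_card hsubTf
  -- ## Upper bound : Tg.card ≤ 2q² - 1
  set Ta := Tg.filter (fun p => p.1.1 = 0 ∧ p.1.2 = 0) with hTa
  set Tb := Tg.filter (fun p => p.1.1 = 0 ∧ p.1.2 ≠ 0) with hTb
  set Tc := Tg.filter (fun p => p.1.1 ≠ 0 ∧ p.1.2 = 0) with hTc
  set Td := Tg.filter (fun p => p.1.1 ≠ 0 ∧ p.1.2 ≠ 0) with hTd
  clear_value Ta Tb Tc Td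
  have hcover : Tg ⊆ Ta ∪ Tb ∪ Tc ∪ Td := by
    intro p hp
    simp only [Finset.mem_union, hTa, hTb, hTc, hTd, mem_filter]
    by_cases hc1 : p.1.1 = 0 <;> by_cases hc2 : p.1.2 = 0 <;> tauto
  have hcardTg : Tg.card ≤ Ta.card + Tb.card + Tc.card + Td.card :=
    calc Tg.card ≤ (Ta ∪ Tb ∪ Tc ∪ Td).card := Finset.card_le_card hcover
    _ ≤ (Ta ∪ Tb ∪ Tc).card + Td.card := Finset.card_union_le _ _
    _ ≤ ((Ta ∪ Tb).card + Tc.card) + Td.card :=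
        Nat.add_le_add_right (Finset.card_union_le _ _) _
    _ ≤ ((Ta.card + Tb.card) + Tc.card) + Td.card :=
        Nat.add_le_add_right (Nat.add_le_add_right (Finset.card_union_le _ _) _) _
  -- Ta bound
  have hTabound : Ta.card + 1 ≤ 2 * q := by
    have hTaZ : Ta.card ≤ ((univ : Finset (F × F)).filter fun r => r.1 * r.2 = 0).card := by
      apply Finset.card_le_card_of_injOn (fun p => p.2)
      · intro p hp
        rw [hTa, Finset.mem_coe, mem_filter] at hp
        obtain ⟨hpT, hx0, hy0⟩ := hp
        rw [hTg, mem_filter] at hpT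
        obtain ⟨-, hH, hG⟩ := hpT
        simp only [Finset.mem_coe, mem_filter, mem_univ, true_and]
        linear_combination hG - (p.1.1 + p.1.2) * hx0 - p.1.2 * hy0
      · intro p hp p' hp' hsnd
        rw [hTa] at hp hp'
        have hm := Finset.mem_filter.mp (Finset.mem_coe.mp hp)
        have hm' := Finset.mem_filter.mp (Finset.mem_coe.mp hp')
        have hfst : p.1 = p'.1 :=
          Prod.ext (hm.2.1.trans hm'.2.1.symm) (hm.2.2.trans hm'.2.2.symm)
        exact Prod.ext hfst hsnd
    have hz := zero_fiber_card (F := F)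
    rw [← hqdef] at hz
    omega
  -- Tb bound
  have hTbbound : Tb.card ≤ q - 1 := by
    have : Tb.card ≤ ((univ : Finset F).erase 0).card := by
      apply Finset.card_le_card_of_injOn (fun p => p.1.2)
      · intro p hp
        rw [hTb, Finset.mem_coe, mem_filter] at hp
        exact Finset.mem_erase.mpr ⟨hp.2.2, mem_univ _⟩
      · intro p hp p' hp' hsnd
        rw [hTb] at hp hp'
        have hm := Finset.mem_filter.mp (Finset.mem_coe.mp hp)
        have hm' := Finset.mem_filter.mp (Finset.mem_coe.mp hp')
        have hy := hm.2.2
        have hsnd' : p.1.2 = p'.1.2 := hsnd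
        obtain ⟨hpT, hx0, -⟩ := hm
        obtain ⟨hpT', hx0', -⟩ := hm'
        rw [hTg, mem_filter] at hpT hpT'
        obtain ⟨-, hH, hG⟩ := hpT
        obtain ⟨-, hH', hG'⟩ := hpT'
        have hax : p.2 = (p.1.2, p.1.2) := by
          apply fiber_axis p.1.2 hy
          · linear_combination hH - (p.1.1 * p.1.2 + p.1.2 ^ 2) * hx0
          · linear_combination hG - (p.1.1 + p.1.2) * hx0
        have hax' : p'.2 = (p'.1.2, p'.1.2) := by
          apply fiber_axis p'.1.2 (hsnd' ▸ hy)
          · linear_combination hH' - (p'.1.1 * p'.1.2 + p'.1.2 ^ 2) * hx0'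
          · linear_combination hG' - (p'.1.1 + p'.1.2) * hx0'
        refine Prod.ext (Prod.ext (hx0.trans hx0'.symm) hsnd') ?_
        rw [hax, hax', hsnd']
    rwa [Finset.card_erase_of_mem (mem_univ _), Finset.card_univ, ← hqdef] at this
  -- Tc bound
  have hTcbound : Tc.card ≤ q - 1 := by
    have : Tc.card ≤ ((univ : Finset F).erase 0).card := by
      apply Finset.card_le_card_of_injOn (fun p => p.1.1)
      · intro p hp
        rw [hTc, Finset.mem_coe, mem_filter] at hp
        exact Finset.mem_erase.mpr ⟨hp.2.1, mem_univ _⟩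
      · intro p hp p' hp' hfst
        rw [hTc] at hp hp'
        have hm := Finset.mem_filter.mp (Finset.mem_coe.mp hp)
        have hm' := Finset.mem_filter.mp (Finset.mem_coe.mp hp')
        have hx := hm.2.1
        have hfst' : p.1.1 = p'.1.1 := hfst
        obtain ⟨hpT, -, hy0⟩ := hm
        obtain ⟨hpT', -, hy0'⟩ := hm'
        rw [hTg, mem_filter] at hpT hpT'
        obtain ⟨-, hH, hG⟩ := hpT
        obtain ⟨-, hH', hG'⟩ := hpT'
        have hax : p.2 = (p.1.1, p.1.1) := by
          apply fiber_axis p.1.1 hx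
          · linear_combination hH - (p.1.1 ^ 2 + p.1.1 * p.1.2) * hy0
          · linear_combination hG - (p.1.1 + p.1.2) * hy0
        have hax' : p'.2 = (p'.1.1, p'.1.1) := by
          apply fiber_axis p'.1.1 (hfst' ▸ hx)
          · linear_combination hH' - (p'.1.1 ^ 2 + p'.1.1 * p'.1.2) * hy0'
          · linear_combination hG' - (p'.1.1 + p'.1.2) * hy0'
        refine Prod.ext (Prod.ext hfst' (hy0.trans hy0'.symm)) ?_
        rw [hax, hax', hfst']
    rwa [Finset.card_erase_of_mem (mem_univ _), Finset.card_univ, ← hqdef] at this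
  -- Td bound
  set NZ := (univ : Finset (F × F)).filter (fun a => a.1 ≠ 0 ∧ a.2 ≠ 0) with hNZ
  clear_value NZ
  have hNZcard : NZ.card = (q - 1) * (q - 1) := by
    have hNZeq : NZ = ((univ : Finset F).erase 0) ×ˢ ((univ : Finset F).erase 0) := by
      ext a
      simp only [hNZ, mem_filter, mem_univ, true_and, Finset.mem_product, Finset.mem_erase,
        and_true]
    rw [hNZeq, Finset.card_product, Finset.card_erase_of_mem (mem_univ _), Finset.card_univ,
      ← hqdef]
  have hTdbound : Td.card ≤ 2 * ((q - 1) * (q - 1)) := by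
    have himg : Td.image (fun p => p.1) ⊆ NZ := by
      intro a ha
      obtain ⟨p, hp, rfl⟩ := Finset.mem_image.mp ha
      rw [hTd, mem_filter] at hp
      rw [hNZ, mem_filter]
      exact ⟨mem_univ _, hp.2.1, hp.2.2⟩
    calc Td.card ≤ 2 * (Td.image (fun p => p.1)).card := by
          apply Finset.card_le_mul_card_image
          intro a ha
          obtain ⟨p0, hp0, rfl⟩ := Finset.mem_image.mp ha
          rw [hTd, mem_filter] at hp0
          obtain ⟨-, hx0, hy0⟩ := hp0
          refine le_trans (Finset.card_le_card_of_injOn (fun p => p.2) ?_ ?_)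
            (fiber_two p0.1.1 p0.1.2 hx0 hy0)
          · intro p hp
            rw [Finset.mem_coe, mem_filter] at hp
            obtain ⟨hpTd, hfix⟩ := hp
            rw [hTd, mem_filter, hTg, mem_filter] at hpTd
            obtain ⟨⟨-, hH, hG⟩, -⟩ := hpTd
            rw [hfix] at hH hG
            exact mem_filter.mpr ⟨mem_univ _, hH, hG⟩
          · intro p hp p' hp' hsnd
            have hm := Finset.mem_filter.mp (Finset.mem_coe.mp hp)
            have hm' := Finset.mem_filter.mp (Finset.mem_coe.mp hp')
            exact Prod.ext (hm.2.trans hm'.2.symm) hsnd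
    _ ≤ 2 * NZ.card := by
          have := Finset.card_le_card himg
          omega
    _ = 2 * ((q - 1) * (q - 1)) := by rw [hNZcard]
  -- ## Arithmetic endgame
  have hr : q - 1 + 1 = q := by omega
  have hrr : (q - 1) * (q - 1) + q + q = q * q + 1 := by
    obtain ⟨r, rfl⟩ : ∃ r, q = r + 1 := ⟨q - 1, by omega⟩
    simp only [Nat.add_sub_cancel]
    ring
  have hge1 : 1 ≤ (q - 1) * (q - 1) := by
    have h1r : 1 ≤ q - 1 := by omega
    calc 1 = 1 * 1 := by norm_num
    _ ≤ (q - 1) * (q - 1) := Nat.mul_le_mul h1r h1r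
  have hcble : Bsrc.card + q = q * q := hcb
  linarith [hTflow, hcardTg, hTabound, hTbbound, hTcbound, hTdbound, hrr, hge1, hcble]
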